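/- arXiv:2203.14410 — 4 statements merged into one kernel-verified Lean document; each statement's English description precedes it below -/
import Mathlib

section
/- Let u : ℝ × ℝ³ → ℝ³ be a velocity field continuously differentiable in all variables, and let η be a flow map for u that is twice continuously differentiable in all variables and satisfies the group law. Fix s ∈ ℝ and let X_s : ℝ³ → ℝ³ be continuously differentiable. Define the pushforward X(t,x) := (D_x η(s,t;·))(η(t,s;x)) (X_s(η(t,s;x))). Then X satisfies ∂_t X + u·∇X − X·∇u = 0 on ℝ × ℝ³; that is, the pushforward of a vector field by the flow is Lie-transported by the flow. -/
noncomputable section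

local notation "E3" => EuclideanSpace ℝ (Fin 3)

/-- The pushforward `X(t,x) := (D_x η(s,t;·))(η(t,s;x)) (X_s(η(t,s;x)))` of a `C¹` vector
field `X_s` by a `C²` flow map `η` of a `C¹` velocity field `u` satisfying the group law
is Lie-transported by the flow: `∂_t X + u·∇X − X·∇u = 0` on `ℝ × ℝ³`. -/
theorem pushforward_is_lie_transported
    (u : ℝ × E3 → E3) (η : ℝ → ℝ → E3 → E3)
    (hu : ContDiff ℝ 1 u)
    (hη : ContDiff ℝ 2 (fun p : ℝ × ℝ × E3 => η p.1 p.2.1 p.2.2))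
    (hflow : ∀ t₁ t₂ x, HasDerivAt (fun s => η t₁ s x) (u (t₂, η t₁ t₂ x)) t₂)
    (hid : ∀ t x, η t t x = x)
    (hgroup : ∀ t₁ t₂ t₃ x, η t₂ t₃ (η t₁ t₂ x) = η t₁ t₃ x)
    (s : ℝ) (Xs : E3 → E3) (hXs : ContDiff ℝ 1 Xs)
    (X : ℝ → E3 → E3)
    (hX : ∀ t x, X t x
      = fderiv ℝ (fun y => η s t y) (η t s x) (Xs (η t s x))) :
    ∀ (t : ℝ) (x : E3),
      deriv (fun t' => X t' x) t
        + fderiv ℝ (fun y => X t y) x (u (t, x))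
        - fderiv ℝ (fun y => u (t, y)) x (X t x) = 0 := by
  intro t x
  -- the joint flow map from time `s`
  set G : ℝ × E3 → E3 := fun p => η s p.1 p.2 with hGdef
  have hG : ContDiff ℝ 2 G := hη.comp (contDiff_const.prodMk contDiff_id)
  have hGdiff : Differentiable ℝ G := hG.differentiable (by norm_num)
  set f2 : ℝ × E3 → (ℝ × E3) →L[ℝ] E3 := fderiv ℝ G with hf2def
  have hf2 : ContDiff ℝ 1 f2 := hG.fderiv_right (by norm_num)
  have hf2diff : Differentiable ℝ f2 := hf2.differentiable one_ne_zero
  -- inclusion in the second factor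
  set ι : E3 →L[ℝ] ℝ × E3 :=
    (0 : E3 →L[ℝ] ℝ).prod (ContinuousLinearMap.id ℝ E3) with hιdef
  have hι : ∀ v : E3, ι v = ((0 : ℝ), v) := by
    intro v; simp [hιdef]
  -- spatial partial derivatives of G
  have hfd_sp : ∀ (t' : ℝ) (z : E3),
      HasFDerivAt (fun w => η s t' w) ((f2 (t', z)).comp ι) z := by
    intro t' z
    have hin : HasFDerivAt (fun w : E3 => ((t', w) : ℝ × E3)) ι z :=
      (hasFDerivAt_const t' z).prodMk (hasFDerivAt_id z)
    exact ((hGdiff (t', z)).hasFDerivAt).comp z hin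
  -- time partial derivative of G
  have htime : ∀ (t' : ℝ) (z : E3), f2 (t', z) ((1 : ℝ), (0 : E3)) = u (t', η s t' z) := by
    intro t' z
    have hin : HasDerivAt (fun r : ℝ => ((r, z) : ℝ × E3)) ((1 : ℝ), (0 : E3)) t' :=
      (hasDerivAt_id t').prodMk (hasDerivAt_const t' z)
    have h1 : HasDerivAt (fun r => G (r, z)) (f2 (t', z) ((1 : ℝ), (0 : E3))) t' :=
      by have := ((hGdiff (t', z)).hasFDerivAt).comp_hasDerivAt t' hin; exact this
    exact h1.unique (hflow s t' z)
  -- the key points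
  set y : E3 := η t s x with hydef
  set v : E3 := Xs y with hvdef
  have hyx : η s t y = x := by rw [hydef, hgroup t s t x, hid]
  -- X as a jointly C¹ function
  have hXfull : ∀ (t' : ℝ) (z : E3),
      X t' z = f2 (t', η t' s z) ((0 : ℝ), Xs (η t' s z)) := by
    intro t' z
    rw [hX t' z, (hfd_sp t' (η t' s z)).fderiv]
    simp [hι]
  set Xf : ℝ × E3 → E3 :=
    fun p => f2 (p.1, η p.1 s p.2) ((0 : ℝ), Xs (η p.1 s p.2)) with hXfdef
  have hw : ContDiff ℝ 2 (fun p : ℝ × E3 => η p.1 s p.2) :=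
    hη.comp (contDiff_fst.prodMk (contDiff_const.prodMk contDiff_snd))
  have hXfC : ContDiff ℝ 1 Xf := by
    refine ContDiff.clm_apply ?_ ?_
    · exact hf2.comp (contDiff_fst.prodMk (hw.of_le one_le_two))
    · exact contDiff_const.prodMk (hXs.comp (hw.of_le one_le_two))
  set F' : ℝ × E3 →L[ℝ] E3 := fderiv ℝ Xf (t, x) with hF'def
  have hXfd : HasFDerivAt Xf F' (t, x) := (hXfC.differentiable one_ne_zero (t, x)).hasFDerivAt
  -- (a) time derivative of X
  have h1 : HasDerivAt (fun t' => X t' x) (F' ((1 : ℝ), (0 : E3))) t := by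
    have : HasDerivAt (fun t' => Xf (t', x)) (F' ((1 : ℝ), (0 : E3))) t :=
      by have := hXfd.comp_hasDerivAt t ((hasDerivAt_id t).prodMk (hasDerivAt_const t x)); exact this
    exact this.congr_of_eventuallyEq
      (Filter.Eventually.of_forall fun t' => (hXfull t' x))
  -- (b) spatial derivative of X
  have h2 : fderiv ℝ (fun z => X t z) x (u (t, x)) = F' ((0 : ℝ), u (t, x)) := by
    have hin : HasFDerivAt (fun z : E3 => ((t, z) : ℝ × E3)) ι x :=
      (hasFDerivAt_const t x).prodMk (hasFDerivAt_id x)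
    have hsp : HasFDerivAt (fun z => Xf (t, z)) (F'.comp ι) x := hXfd.comp x hin
    have heq : (fun z => X t z) = fun z => Xf (t, z) := funext fun z => hXfull t z
    rw [heq, hsp.fderiv]
    simp [hι]
  -- (c) material derivative = derivative along the flow line
  have hux : HasDerivAt (fun t' => η t t' x) (u (t, x)) t := by
    have := hflow t t x; rwa [hid] at this
  have hXfd' : HasFDerivAt Xf F' (t, η t t x) := by rw [hid]; exact hXfd
  have h3 : HasDerivAt (fun t' => Xf (t', η t t' x)) (F' ((1 : ℝ), u (t, x))) t :=
    by have := hXfd'.comp_hasDerivAt t ((hasDerivAt_id t).prodMk hux); exact this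
  -- (d) along the flow line, the pushforward is `f2 (t', y) (0, v)`
  have hline : (fun t' => Xf (t', η t t' x)) = fun t' => f2 (t', y) ((0 : ℝ), v) := by
    funext t'
    have h : η t' s (η t t' x) = y := by rw [hgroup t t' s x, hydef]
    simp only [hXfdef, h, hvdef]
  -- (e) derivative of `t' ↦ f2 (t', y) (0, v)`
  set B : ℝ × E3 →L[ℝ] (ℝ × E3) →L[ℝ] E3 := fderiv ℝ f2 (t, y) with hBdef
  have hBd : HasFDerivAt f2 B (t, y) := (hf2diff (t, y)).hasFDerivAt
  have hc : HasDerivAt (fun t' => f2 (t', y)) (B ((1 : ℝ), (0 : E3))) t :=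
    hBd.comp_hasDerivAt t ((hasDerivAt_id t).prodMk (hasDerivAt_const t y))
  have h4 : HasDerivAt (fun t' => f2 (t', y) ((0 : ℝ), v))
      (B ((1 : ℝ), (0 : E3)) ((0 : ℝ), v)) t := by
    simpa using hc.clm_apply (hasDerivAt_const t (((0 : ℝ), v) : ℝ × E3))
  -- symmetry of the second derivative (Schwarz)
  have hsymm : B ((1 : ℝ), (0 : E3)) ((0 : ℝ), v) = B ((0 : ℝ), v) ((1 : ℝ), (0 : E3)) :=
    second_derivative_symmetric (fun q => (hGdiff q).hasFDerivAt) hBd _ _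
  -- (g) compute `B (0, v) (1, 0)` as the spatial derivative of `z ↦ u (t, η s t z)`
  set du : E3 →L[ℝ] E3 := fderiv ℝ (fun w => u (t, w)) x with hdud
  have hdu : HasFDerivAt (fun w => u (t, w)) du x := by
    have : Differentiable ℝ (fun w : E3 => u (t, w)) :=
      (hu.differentiable one_ne_zero).comp ((differentiable_const t).prodMk differentiable_id)
    exact (this x).hasFDerivAt
  have hdu' : HasFDerivAt (fun w => u (t, w)) du (η s t y) := hyx ▸ hdu
  have h7 : HasFDerivAt (fun z => u (t, η s t z))
      (du.comp ((f2 (t, y)).comp ι)) y := hdu'.comp y (hfd_sp t y)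
  have hin2 : HasFDerivAt (fun z : E3 => ((t, z) : ℝ × E3)) ι y :=
    (hasFDerivAt_const t y).prodMk (hasFDerivAt_id y)
  have h5 : HasFDerivAt (fun z => f2 (t, z)) (B.comp ι) y := hBd.comp y hin2
  set ev : ((ℝ × E3) →L[ℝ] E3) →L[ℝ] E3 :=
    ContinuousLinearMap.apply ℝ E3 (((1 : ℝ), (0 : E3)) : ℝ × E3) with hevd
  have h6 : HasFDerivAt (fun z => f2 (t, z) ((1 : ℝ), (0 : E3)))
      (ev.comp (B.comp ι)) y := by
    have := ev.hasFDerivAt.comp y h5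
    exact this
  have heqf : (fun z => f2 (t, z) ((1 : ℝ), (0 : E3))) = fun z => u (t, η s t z) :=
    funext fun z => htime t z
  have h8 : ev.comp (B.comp ι) = du.comp ((f2 (t, y)).comp ι) :=
    (heqf ▸ h6).unique h7
  have h9 : B ((0 : ℝ), v) ((1 : ℝ), (0 : E3)) = du (f2 (t, y) ((0 : ℝ), v)) := by
    have := congrArg (fun (L : E3 →L[ℝ] E3) => L v) h8
    simpa [hι, hevd] using this
  -- identify `f2 (t, y) (0, v)` with `X t x`
  have hXtx : X t x = f2 (t, y) ((0 : ℝ), v) := hXfull t x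
  -- assemble
  have hd1 : deriv (fun t' => X t' x) t = F' ((1 : ℝ), (0 : E3)) := h1.deriv
  have hd3 : F' ((1 : ℝ), u (t, x)) = B ((1 : ℝ), (0 : E3)) ((0 : ℝ), v) := by
    have h3' : HasDerivAt (fun t' => f2 (t', y) ((0 : ℝ), v)) (F' ((1 : ℝ), u (t, x))) t :=
      hline ▸ h3
    exact h3'.unique h4
  have hsum : F' ((1 : ℝ), (0 : E3)) + F' ((0 : ℝ), u (t, x)) = F' ((1 : ℝ), u (t, x)) := by
    rw [← F'.map_add]
    norm_num
  rw [hd1, h2, hXtx]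
  rw [hsum, hd3, hsymm, h9, hdud]
  exact sub_self _
end
end

section
/- Let u : ℝ × ℝ³ → ℝ³ be a velocity field continuously differentiable in all variables, and let η be a flow map for u that is twice continuously differentiable in all variables and satisfies the group law. Let O ⊆ ℝ × ℝ³ be open, and let τ : O → ℝ and γ : O → ℝ³ be continuously differentiable maps which are constant along flow lines, i.e., whenever (s,x) ∈ O and (t, η(s,t;x)) ∈ O one has τ(t, η(s,t;x)) = τ(s,x) and γ(t, η(s,t;x)) = γ(s,x), and which satisfy η(τ(t,x), t; γ(t,x)) = x for all (t,x) ∈ O. Let H : ℝ × ℝ³ → ℝ³ be continuously differentiable. Define X(t,x) := (D_x η(τ(t,x), t; ·))(γ(t,x)) (H(τ(t,x), γ(t,x))) on O. Then ∂_t X + u·∇X − X·∇u = 0 on O; that is, the pushforward of boundary data along the flow is Lie-transported by the flow. -/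
noncomputable section

local notation "E3" => EuclideanSpace ℝ (Fin 3)

/-- The pushforward `X(t,x) := (D_x η(τ(t,x),t;·))(γ(t,x)) (H(τ(t,x),γ(t,x)))` of
boundary data `H` along the flow, where `τ` and `γ` are `C¹` on an open set `O`, constant
along flow lines, and satisfy `η(τ(t,x),t;γ(t,x)) = x`, is Lie-transported by the flow:
`∂_t X + u·∇X − X·∇u = 0` on `O`. -/
theorem pushforward_of_boundary_data_is_lie_transported
    (u : ℝ × E3 → E3) (hu : ContDiff ℝ 1 u)
    (η : ℝ → ℝ → E3 → E3)
    (hη : ContDiff ℝ 2 (fun p : ℝ × ℝ × E3 => η p.1 p.2.1 p.2.2))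
    (hflow : ∀ t₁ t₂ x, HasDerivAt (fun s => η t₁ s x) (u (t₂, η t₁ t₂ x)) t₂)
    (hid : ∀ t x, η t t x = x)
    (hgroup : ∀ t₁ t₂ t₃ x, η t₂ t₃ (η t₁ t₂ x) = η t₁ t₃ x)
    (O : Set (ℝ × E3)) (hO : IsOpen O)
    (τ : ℝ × E3 → ℝ) (γ : ℝ × E3 → E3)
    (hτ : ContDiffOn ℝ 1 τ O) (hγ : ContDiffOn ℝ 1 γ O)
    (hconst : ∀ (s : ℝ) (x : E3) (t : ℝ), (s, x) ∈ O → (t, η s t x) ∈ O →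
      τ (t, η s t x) = τ (s, x) ∧ γ (t, η s t x) = γ (s, x))
    (hrel : ∀ p ∈ O, η (τ p) p.1 (γ p) = p.2)
    (H : ℝ × E3 → E3) (hH : ContDiff ℝ 1 H)
    (X : ℝ → E3 → E3)
    (hX : ∀ t x, X t x
      = fderiv ℝ (fun y => η (τ (t, x)) t y) (γ (t, x)) (H (τ (t, x), γ (t, x)))) :
    ∀ (t : ℝ) (x : E3), (t, x) ∈ O →
      deriv (fun t' => X t' x) t
        + fderiv ℝ (fun y => X t y) x (u (t, x))
        - fderiv ℝ (fun y => u (t, y)) x (X t x) = 0 := by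
  intro t x hmem
  set τ₀ : ℝ := τ (t, x) with hτ₀
  set γ₀ : E3 := γ (t, x) with hγ₀
  set H₀ : E3 := H (τ₀, γ₀) with hH₀
  -- the frozen flow map from time τ₀
  set Φ : ℝ × E3 → E3 := fun p => η τ₀ p.1 p.2 with hΦdef
  have hΦ : ContDiff ℝ 2 Φ := hη.comp (ContDiff.prodMk (contDiff_const (c := τ₀)) contDiff_id :
    ContDiff ℝ 2 (fun p : ℝ × E3 => (τ₀, p)))
  set F : ℝ × E3 → (ℝ × E3) →L[ℝ] E3 := fderiv ℝ Φ with hFdef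
  have hF : ContDiff ℝ 1 F := hΦ.fderiv_right (by norm_num)
  have hΦd : ∀ p, HasFDerivAt Φ (F p) p := fun p =>
    ((hΦ.differentiable (by norm_num)) p).hasFDerivAt
  set F'' : (ℝ × E3) →L[ℝ] (ℝ × E3) →L[ℝ] E3 := fderiv ℝ F (t, γ₀) with hF''def
  have hF''d : HasFDerivAt F F'' (t, γ₀) := ((hF.differentiable one_ne_zero) (t, γ₀)).hasFDerivAt
  have hsymm : ∀ v w, F'' v w = F'' w v := second_derivative_symmetric hΦd hF''d
  have hx0 : Φ (t, γ₀) = x := hrel (t, x) hmem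
  -- the partial derivative in the space variable
  have hpart : ∀ (s : ℝ) (c : E3),
      fderiv ℝ (fun y => η τ₀ s y) c = (F (s, c)).comp (ContinuousLinearMap.inr ℝ ℝ E3) := by
    intro s c
    exact ((hΦd (s, c)).comp c (hasFDerivAt_prodMk_right s c)).fderiv
  -- X t x in terms of F
  have hXF : X t x = F (t, γ₀) (0, H₀) := by
    rw [hX t x, ← hτ₀, ← hγ₀, ← hH₀, hpart]; rfl
  -- key computation: F'' (0,H₀) (1,0) = D u (t,x) (0, X t x)
  have hFG : ∀ p : ℝ × E3, F p (1, 0) = u (p.1, Φ p) := by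
    intro p
    have h1 : HasDerivAt (fun s => Φ (s, p.2)) (F p (1, 0)) p.1 := by
      have := (hΦd p).comp_hasDerivAt p.1
        ((hasDerivAt_id p.1).prodMk (hasDerivAt_const p.1 p.2))
      exact this
    have h2 : HasDerivAt (fun s => η τ₀ s p.2) (u (p.1, η τ₀ p.1 p.2)) p.1 := hflow τ₀ p.1 p.2
    exact h1.unique h2
  have hGd1 : HasFDerivAt (fun p : ℝ × E3 => F p (1, 0))
      ((ContinuousLinearMap.apply ℝ E3 ((1 : ℝ), (0 : E3))).comp F'') (t, γ₀) :=
    (ContinuousLinearMap.apply ℝ E3 ((1 : ℝ), (0 : E3))).hasFDerivAt.comp _ hF''d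
  have hGd2 : HasFDerivAt (fun p : ℝ × E3 => u (p.1, Φ p))
      ((fderiv ℝ u (t, x)).comp ((ContinuousLinearMap.fst ℝ ℝ E3).prod (F (t, γ₀)))) (t, γ₀) := by
    have hinner : HasFDerivAt (fun p : ℝ × E3 => (p.1, Φ p))
        ((ContinuousLinearMap.fst ℝ ℝ E3).prod (F (t, γ₀))) (t, γ₀) :=
      (hasFDerivAt_fst).prodMk (hΦd (t, γ₀))
    have hud : HasFDerivAt u (fderiv ℝ u (t, x)) (t, Φ (t, γ₀)) := by
      rw [hx0]; exact ((hu.differentiable one_ne_zero) (t, x)).hasFDerivAt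
    exact hud.comp ((t, γ₀) : ℝ × E3) hinner
  have hkey2 : F'' (0, H₀) (1, 0) = fderiv ℝ u (t, x) (0, X t x) := by
    have heq : (fun p : ℝ × E3 => F p (1, 0)) = fun p : ℝ × E3 => u (p.1, Φ p) :=
      funext fun p => hFG p
    rw [heq] at hGd1
    have := hGd1.unique hGd2
    have happ := congrArg (fun (T : (ℝ × E3) →L[ℝ] E3) => T ((0 : ℝ), H₀)) this
    simpa [hXF] using happ
  -- derivative of s ↦ F (s, γ₀) (0, H₀)
  have hkey1 : HasDerivAt (fun s => F (s, γ₀) (0, H₀)) (F'' (1, 0) (0, H₀)) t := by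
    have h1 : HasDerivAt (fun s => F (s, γ₀)) (F'' (1, 0)) t := by
      have := hF''d.comp_hasDerivAt t ((hasDerivAt_id t).prodMk (hasDerivAt_const t γ₀))
      exact this
    have := h1.clm_apply (hasDerivAt_const t ((0 : ℝ), H₀))
    simpa using this
  -- global form of X
  set Xt : ℝ × E3 → E3 := fun p =>
    fderiv ℝ (fun y => η (τ p) p.1 y) (γ p) (H (τ p, γ p)) with hXtdef
  have hXX : ∀ s y, X s y = Xt (s, y) := fun s y => hX s y
  -- Xt is C¹ on O
  set Ψ : ℝ × ℝ × E3 → E3 := fun q => η q.1 q.2.1 q.2.2 with hΨdef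
  set J : E3 →L[ℝ] ℝ × ℝ × E3 :=
    (ContinuousLinearMap.inr ℝ ℝ (ℝ × E3)).comp (ContinuousLinearMap.inr ℝ ℝ E3) with hJdef
  have hpart3 : ∀ (a b : ℝ) (c : E3),
      fderiv ℝ (fun y => η a b y) c = (fderiv ℝ Ψ (a, b, c)).comp J := by
    intro a b c
    have hΨd : HasFDerivAt Ψ (fderiv ℝ Ψ (a, b, c)) (a, b, c) :=
      ((hη.differentiable two_ne_zero) (a, b, c)).hasFDerivAt
    have hJd : HasFDerivAt (fun y : E3 => ((a : ℝ), (b : ℝ), y)) J c :=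
      (hasFDerivAt_prodMk_right a ((b : ℝ), c)).comp c (hasFDerivAt_prodMk_right b c)
    exact (hΨd.comp c hJd).fderiv
  have hXt : ContDiffOn ℝ 1 Xt O := by
    have hmap : ContDiffOn ℝ 1 (fun p : ℝ × E3 => (τ p, p.1, γ p)) O :=
      hτ.prodMk (contDiff_fst.contDiffOn.prodMk hγ)
    have hB : ContDiff ℝ 1 (fun q : ℝ × ℝ × E3 => (fderiv ℝ Ψ q).comp J) :=
      (hη.fderiv_right (by norm_num)).clm_comp contDiff_const
    have h1 : ContDiffOn ℝ 1
        (fun p : ℝ × E3 => ((fderiv ℝ Ψ (τ p, p.1, γ p)).comp J) (H (τ p, γ p))) O :=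
      (hB.comp_contDiffOn hmap).clm_apply (hH.comp_contDiffOn (hτ.prodMk hγ))
    refine h1.congr fun p _ => ?_
    show (fderiv ℝ (fun y => η (τ p) p.1 y) (γ p)) (H (τ p, γ p)) = _
    rw [hpart3]
  set L : (ℝ × E3) →L[ℝ] E3 := fderiv ℝ Xt (t, x) with hLdef
  have hLd : HasFDerivAt Xt L (t, x) :=
    (((hXt.contDiffAt (hO.mem_nhds hmem)).differentiableAt one_ne_zero)).hasFDerivAt
  -- (1) time derivative
  have h1 : deriv (fun t' => X t' x) t = L (1, 0) := by
    have : HasDerivAt (fun t' => Xt (t', x)) (L (1, 0)) t := by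
      have := hLd.comp_hasDerivAt t ((hasDerivAt_id t).prodMk (hasDerivAt_const t x))
      exact this
    have heq : (fun t' => X t' x) = fun t' => Xt (t', x) := funext fun t' => hXX t' x
    rw [heq]
    exact this.deriv
  -- (2) space derivative of X
  have h2 : fderiv ℝ (fun y => X t y) x (u (t, x)) = L (0, u (t, x)) := by
    have : HasFDerivAt (fun y => Xt (t, y)) (L.comp (ContinuousLinearMap.inr ℝ ℝ E3)) x :=
      hLd.comp x (hasFDerivAt_prodMk_right t x)
    have heq : (fun y => X t y) = fun y => Xt (t, y) := funext fun y => hXX t y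
    rw [heq, this.fderiv]
    rfl
  -- (3) space derivative of u
  have h3 : fderiv ℝ (fun y => u (t, y)) x (X t x) = fderiv ℝ u (t, x) (0, X t x) := by
    have : HasFDerivAt (fun y => u (t, y))
        ((fderiv ℝ u (t, x)).comp (ContinuousLinearMap.inr ℝ ℝ E3)) x :=
      (((hu.differentiable one_ne_zero) (t, x)).hasFDerivAt).comp x (hasFDerivAt_prodMk_right t x)
    rw [this.fderiv]
    rfl
  -- (4) L (1, u(t,x)) = D u (t,x) (0, X t x), via transport along the flow line
  have h4 : L (1, u (t, x)) = fderiv ℝ u (t, x) (0, X t x) := by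
    have hcont : Continuous fun s => ((s : ℝ), η t s x) := by
      have hc1 : Continuous fun s : ℝ => ((t : ℝ), ((s : ℝ), (x : E3))) :=
        continuous_const.prodMk (continuous_id.prodMk continuous_const)
      have : Continuous fun s : ℝ => η t s x := hη.continuous.comp hc1
      exact continuous_id.prodMk this
    have hnhds : ∀ᶠ s in nhds t, ((s : ℝ), η t s x) ∈ O := by
      have : (t, η t t x) ∈ O := by rw [hid]; exact hmem
      exact hcont.continuousAt.preimage_mem_nhds (hO.mem_nhds this)
    have hflowd : HasDerivAt (fun s => ((s : ℝ), η t s x)) ((1 : ℝ), u (t, x)) t := by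
      have hd := hflow t t x
      rw [hid t x] at hd
      exact (hasDerivAt_id t).prodMk hd
    have hXtflow : HasDerivAt (fun s => Xt (s, η t s x)) (L (1, u (t, x))) t := by
      have hLd' : HasFDerivAt Xt L (t, η t t x) := by rw [hid]; exact hLd
      have := hLd'.comp_hasDerivAt t hflowd
      exact this
    have heq : ∀ᶠ s in nhds t, Xt (s, η t s x) = F (s, γ₀) (0, H₀) := by
      filter_upwards [hnhds] with s hs
      obtain ⟨hτeq, hγeq⟩ := hconst t x s hmem hs
      rw [hXtdef]
      simp only [hτeq, hγeq, ← hτ₀, ← hγ₀, ← hH₀]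
      rw [hpart]
      rfl
    have hFflow : HasDerivAt (fun s => F (s, γ₀) (0, H₀)) (L (1, u (t, x))) t :=
      hXtflow.congr_of_eventuallyEq (heq.mono fun s hs => hs.symm)
    have := hFflow.unique hkey1
    rw [this, hsymm, hkey2]
  rw [h1, h2, h3, ← h4, ← L.map_add]
  simp
end
end

section
/- Let Ω ⊆ ℝ³ be open and I ⊆ ℝ an open interval. Let u : I × Ω → ℝ³ be continuous and twice continuously differentiable in the spatial variable with div u(t,·) = 0 on Ω for every t ∈ I. Let g : I × Ω → ℝ³ be continuously differentiable in the spatial variable with div g(t,·) = 0 on Ω for every t ∈ I. Let Y : I × Ω → ℝ³ be twice continuously differentiable jointly in (t,x) and satisfy ∂_t Y + u·∇Y − Y·∇u = g on I × Ω. Then the scalar field φ := div Y satisfies the transport equation ∂_t φ + u·∇φ = 0 on I × Ω. -/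
noncomputable section

local notation "E3" => EuclideanSpace ℝ (Fin 3)

/-- Divergence of a vector field `v : ℝ³ → ℝ³` at `x`: `div v = ∑ᵢ ∂ᵢvⁱ`. -/
noncomputable def div3 (v : E3 → E3) (x : E3) : ℝ :=
  ∑ i : Fin 3, fderiv ℝ v x (EuclideanSpace.single i 1) i

lemma fderiv_comp_proj {f : E3 → E3} {x : E3} (hf : DifferentiableAt ℝ f x) (v : E3) (i : Fin 3) :
    fderiv ℝ (fun y => f y i) x v = fderiv ℝ f x v i := by
  have h : HasFDerivAt (fun y => f y i)
      ((EuclideanSpace.proj i : E3 →L[ℝ] ℝ).comp (fderiv ℝ f x)) x := by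
    simpa [Function.comp_def] using (EuclideanSpace.proj (𝕜 := ℝ) i).hasFDerivAt.comp x hf.hasFDerivAt
  rw [h.fderiv]; rfl

lemma deriv_comp_proj {f : ℝ → E3} {t : ℝ} (hf : DifferentiableAt ℝ f t) (i : Fin 3) :
    deriv (fun s => f s i) t = deriv f t i := by
  have h := (EuclideanSpace.proj (𝕜 := ℝ) i).hasFDerivAt.comp_hasDerivAt t hf.hasDerivAt
  simpa [Function.comp_def] using h.deriv

variable {F' : Type*} [NormedAddCommGroup F'] [NormedSpace ℝ F']

lemma fderiv_partial_snd {f : ℝ × E3 → F'} {t : ℝ} {x : E3} (hf : DifferentiableAt ℝ f (t, x))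
    (v : E3) : fderiv ℝ (fun y => f (t, y)) x v = fderiv ℝ f (t, x) (0, v) := by
  have h := hf.hasFDerivAt.comp x (hasFDerivAt_prodMk_right (𝕜 := ℝ) t x)
  have h' : HasFDerivAt (fun y => f (t, y))
      ((fderiv ℝ f (t, x)).comp (ContinuousLinearMap.inr ℝ ℝ E3)) x := h
  rw [h'.fderiv]; simp

lemma hasDerivAt_partial_fst {f : ℝ × E3 → F'} {t : ℝ} {x : E3} (hf : DifferentiableAt ℝ f (t, x)) :
    HasDerivAt (fun s => f (s, x)) (fderiv ℝ f (t, x) (1, 0)) t := by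
  have h : HasDerivAt (fun s : ℝ => ((s, x) : ℝ × E3)) ((1 : ℝ), (0 : E3)) t :=
    (hasDerivAt_id t).prodMk (hasDerivAt_const t x)
  simpa [Function.comp_def] using hf.hasFDerivAt.comp_hasDerivAt t h

lemma fderiv_clm_apply_const {E G H : Type*} [NormedAddCommGroup E] [NormedSpace ℝ E]
    [NormedAddCommGroup G] [NormedSpace ℝ G] [NormedAddCommGroup H] [NormedSpace ℝ H]
    {c : E → G →L[ℝ] H} {x : E} (hc : DifferentiableAt ℝ c x) (v : G) (w : E) :
    fderiv ℝ (fun y => c y v) x w = fderiv ℝ c x w v := by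
  rw [fderiv_clm_apply hc (differentiableAt_const v)]
  simp

lemma symm_sp {f : E3 → ℝ} {x : E3} (hf : ContDiffAt ℝ 2 f x) (v w : E3) :
    fderiv ℝ (fun y => fderiv ℝ f y v) x w = fderiv ℝ (fun y => fderiv ℝ f y w) x v := by
  have hd : DifferentiableAt ℝ (fderiv ℝ f) x :=
    (hf.fderiv_right (le_refl _)).differentiableAt one_ne_zero
  rw [fderiv_clm_apply_const hd v w, fderiv_clm_apply_const hd w v]
  exact (hf.isSymmSndFDerivAt (by simp)).eq w v

lemma fderiv_basis_decomp {f : E3 → ℝ} {x : E3} (w : E3) :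
    fderiv ℝ f x w = ∑ j : Fin 3, w j * fderiv ℝ f x (EuclideanSpace.single j 1) := by
  have hw : w = ∑ j : Fin 3, w j • EuclideanSpace.single j (1 : ℝ) := by
    have := (EuclideanSpace.basisFun (Fin 3) ℝ).sum_repr w
    simpa [EuclideanSpace.basisFun_apply, EuclideanSpace.basisFun_repr] using this.symm
  conv_lhs => rw [hw]
  simp [smul_eq_mul]

lemma mixed_deriv {F : ℝ × E3 → ℝ} {P : Set (ℝ × E3)} (hP : IsOpen P) {t : ℝ} {x : E3}
    (hmem : (t, x) ∈ P) (hF : ContDiffOn ℝ 2 F P) (v : E3) :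
    HasDerivAt (fun s => fderiv ℝ (fun y => F (s, y)) x v)
      (fderiv ℝ (fun y => deriv (fun s => F (s, y)) t) x v) t := by
  have hF2 : ∀ p ∈ P, ContDiffAt ℝ 2 F p := fun p hp => hF.contDiffAt (hP.mem_nhds hp)
  have hdiff : ∀ p ∈ P, DifferentiableAt ℝ F p := fun p hp =>
    (hF2 p hp).differentiableAt two_ne_zero
  have hf' : DifferentiableAt ℝ (fderiv ℝ F) (t, x) :=
    ((hF2 _ hmem).fderiv_right (le_refl _)).differentiableAt one_ne_zero
  have hx_ev : ∀ᶠ y in nhds x, (t, y) ∈ P :=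
    (hP.preimage (Continuous.prodMk_right t)).eventually_mem hmem
  have ht_ev : ∀ᶠ s in nhds t, (s, x) ∈ P :=
    (hP.preimage (continuous_id.prodMk continuous_const)).eventually_mem hmem
  -- value equality for the RHS
  have e1 : (fun y => deriv (fun s => F (s, y)) t) =ᶠ[nhds x]
      (fun y => fderiv ℝ F (t, y) ((1 : ℝ), (0 : E3))) := by
    filter_upwards [hx_ev] with y hy
    exact (hasDerivAt_partial_fst (hdiff _ hy)).deriv
  have hG : DifferentiableAt ℝ (fun p => fderiv ℝ F p ((1 : ℝ), (0 : E3))) (t, x) :=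
    hf'.clm_apply (differentiableAt_const _)
  have hval : fderiv ℝ (fun y => deriv (fun s => F (s, y)) t) x v
      = fderiv ℝ (fderiv ℝ F) (t, x) ((1 : ℝ), (0 : E3)) (0, v) := by
    rw [e1.fderiv_eq]
    rw [fderiv_partial_snd hG v]
    rw [fderiv_clm_apply_const hf' ((1 : ℝ), (0 : E3)) ((0 : ℝ), v)]
    exact ((hF2 _ hmem).isSymmSndFDerivAt (by simp)).eq _ _
  rw [hval]
  -- goal: HasDerivAt (fun s => fderiv ℝ (fun y => F (s,y)) x v)
  --   (fderiv ℝ (fderiv ℝ F) (t,x) (0,v) (1,0)) t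
  have key : HasDerivAt (fun s => fderiv ℝ F (s, x) ((0 : ℝ), v))
      (fderiv ℝ (fderiv ℝ F) (t, x) ((1 : ℝ), (0 : E3)) ((0 : ℝ), v)) t := by
    have h1 : HasDerivAt (fun s => fderiv ℝ F (s, x))
        (fderiv ℝ (fderiv ℝ F) (t, x) ((1 : ℝ), (0 : E3))) t := hasDerivAt_partial_fst hf'
    simpa [Function.comp_def] using
      ((ContinuousLinearMap.apply ℝ ℝ ((0 : ℝ), v)).hasFDerivAt.comp_hasDerivAt t h1)
  refine key.congr_of_eventuallyEq ?_
  filter_upwards [ht_ev] with s hs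
  exact fderiv_partial_snd (hdiff _ hs) v

lemma contDiffAt_comp_proj {f : E3 → E3} {y : E3} {n : ℕ} (h : ContDiffAt ℝ n f y) (i : Fin 3) :
    ContDiffAt ℝ n (fun z => f z i) y :=
  ((EuclideanSpace.proj (𝕜 := ℝ) i).contDiff.contDiffAt).comp y h

/-- If `u` is divergence-free and spatially `C²`, `g` is divergence-free and spatially
`C¹`, and `Y` is `C²` on `I × Ω` and satisfies `∂_t Y + u·∇Y − Y·∇u = g`, then
`φ := div Y` satisfies the transport equation `∂_t φ + u·∇φ = 0` on `I × Ω`. -/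
theorem div_of_solution_is_transported
    (Ω : Set E3) (hΩ : IsOpen Ω)
    (I : Set ℝ) (hI : IsOpen I) (hI' : I.OrdConnected)
    (u g Y : ℝ × E3 → E3)
    (hu_cont : ContinuousOn u (I ×ˢ Ω))
    (hu_sp : ∀ t ∈ I, ContDiffOn ℝ 2 (fun x => u (t, x)) Ω)
    (hu_div : ∀ t ∈ I, ∀ x ∈ Ω, div3 (fun y => u (t, y)) x = 0)
    (hg_sp : ∀ t ∈ I, ContDiffOn ℝ 1 (fun x => g (t, x)) Ω)
    (hg_div : ∀ t ∈ I, ∀ x ∈ Ω, div3 (fun y => g (t, y)) x = 0)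
    (hY : ContDiffOn ℝ 2 Y (I ×ˢ Ω))
    (hPDE : ∀ t ∈ I, ∀ x ∈ Ω,
      deriv (fun s => Y (s, x)) t
        + fderiv ℝ (fun y => Y (t, y)) x (u (t, x))
        - fderiv ℝ (fun y => u (t, y)) x (Y (t, x)) = g (t, x)) :
    ∀ t ∈ I, ∀ x ∈ Ω,
      deriv (fun s => div3 (fun y => Y (s, y)) x) t
        + fderiv ℝ (fun y => div3 (fun z => Y (t, z)) y) x (u (t, x)) = 0 := by
  intro t ht x hx
  have hP : IsOpen (I ×ˢ Ω) := hI.prod hΩ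
  have hmem : (t, x) ∈ I ×ˢ Ω := ⟨ht, hx⟩
  have hx_ev : ∀ᶠ y in nhds x, y ∈ Ω := hΩ.eventually_mem hx
  have ht_ev : ∀ᶠ s in nhds t, s ∈ I := hI.eventually_mem ht
  have hYc2 : ∀ p ∈ I ×ˢ Ω, ContDiffAt ℝ 2 Y p := fun p hp => hY.contDiffAt (hP.mem_nhds hp)
  have hYsp : ∀ s ∈ I, ∀ y ∈ Ω, ContDiffAt ℝ 2 (fun z => Y (s, z)) y := fun s hs y hy =>
    (hYc2 (s, y) ⟨hs, hy⟩).comp y ((contDiff_const.prodMk contDiff_id).contDiffAt)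
  have hYsd : ∀ s ∈ I, ∀ y ∈ Ω, DifferentiableAt ℝ (fun z => Y (s, z)) y := fun s hs y hy =>
    (hYsp s hs y hy).differentiableAt two_ne_zero
  have hYtd : ∀ y ∈ Ω, DifferentiableAt ℝ (fun z => Y (t, z)) y := hYsd t ht
  have hutc2 : ∀ y ∈ Ω, ContDiffAt ℝ 2 (fun z => u (t, z)) y := fun y hy =>
    (hu_sp t ht).contDiffAt (hΩ.mem_nhds hy)
  have hutd : ∀ y ∈ Ω, DifferentiableAt ℝ (fun z => u (t, z)) y := fun y hy =>
    (hutc2 y hy).differentiableAt two_ne_zero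
  have hgtd : ∀ y ∈ Ω, DifferentiableAt ℝ (fun z => g (t, z)) y := fun y hy =>
    ((hg_sp t ht).contDiffAt (hΩ.mem_nhds hy)).differentiableAt one_ne_zero
  have hutd_x : DifferentiableAt ℝ (fun z => u (t, z)) x := hutd x hx
  have hYtd_x : DifferentiableAt ℝ (fun z => Y (t, z)) x := hYtd x hx
  have hYti : ∀ i : Fin 3, ContDiffAt ℝ 2 (fun z => Y (t, z) i) x := fun i =>
    contDiffAt_comp_proj (hYsp t ht x hx) i
  have huti : ∀ i : Fin 3, ContDiffAt ℝ 2 (fun z => u (t, z) i) x := fun i =>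
    contDiffAt_comp_proj (hutc2 x hx) i
  have hYti' : ∀ i : Fin 3, DifferentiableAt ℝ (fderiv ℝ (fun z => Y (t, z) i)) x := fun i =>
    ((hYti i).fderiv_right (le_refl _)).differentiableAt one_ne_zero
  have huti' : ∀ i : Fin 3, DifferentiableAt ℝ (fderiv ℝ (fun z => u (t, z) i)) x := fun i =>
    ((huti i).fderiv_right (le_refl _)).differentiableAt one_ne_zero
  -- Step A : commute time derivative with the spatial divergence
  have hA : deriv (fun s => div3 (fun y => Y (s, y)) x) t
      = ∑ i : Fin 3, fderiv ℝ (fun y => deriv (fun s => Y (s, y) i) t) x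
          (EuclideanSpace.single i 1) := by
    have e0 : (fun s => div3 (fun y => Y (s, y)) x) =ᶠ[nhds t]
        (fun s => ∑ i : Fin 3, fderiv ℝ (fun y => Y (s, y) i) x (EuclideanSpace.single i 1)) := by
      filter_upwards [ht_ev] with s hs
      exact Finset.sum_congr rfl fun i _ => (fderiv_comp_proj (hYsd s hs x hx) _ i).symm
    rw [e0.deriv_eq]
    exact (HasDerivAt.fun_sum fun i _ => mixed_deriv hP hmem
      ((EuclideanSpace.proj (𝕜 := ℝ) i).contDiff.comp_contDiffOn hY)
      (EuclideanSpace.single i 1)).deriv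
  -- Step B : rewrite the time derivative using the PDE
  have hPDE' : ∀ y ∈ Ω, deriv (fun s => Y (s, y)) t
      = g (t, y) - fderiv ℝ (fun z => Y (t, z)) y (u (t, y))
        + fderiv ℝ (fun z => u (t, z)) y (Y (t, y)) := by
    intro y hy
    have h := hPDE t ht y hy
    rw [← h]; abel
  have hB : ∀ i : Fin 3, (fun y => deriv (fun s => Y (s, y) i) t) =ᶠ[nhds x]
      (fun y => g (t, y) i - fderiv ℝ (fun z => Y (t, z) i) y (u (t, y))
        + fderiv ℝ (fun z => u (t, z) i) y (Y (t, y))) := by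
    intro i
    filter_upwards [hx_ev] with y hy
    have hd : DifferentiableAt ℝ (fun s => Y (s, y)) t :=
      ((hYc2 (t, y) ⟨ht, hy⟩).differentiableAt two_ne_zero).comp t
        (differentiableAt_id.prodMk (differentiableAt_const y))
    rw [deriv_comp_proj hd i, hPDE' y hy,
      fderiv_comp_proj (hYtd y hy) _ i, fderiv_comp_proj (hutd y hy) _ i]
    simp [PiLp.add_apply, PiLp.sub_apply]
  have hA2 : deriv (fun s => div3 (fun y => Y (s, y)) x) t
      = ∑ i : Fin 3, fderiv ℝ (fun y => g (t, y) i
          - fderiv ℝ (fun z => Y (t, z) i) y (u (t, y))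
          + fderiv ℝ (fun z => u (t, z) i) y (Y (t, y))) x (EuclideanSpace.single i 1) := by
    rw [hA]
    exact Finset.sum_congr rfl fun i _ => by rw [(hB i).fderiv_eq]
  -- differentiability of the three pieces
  have hgdi : ∀ i : Fin 3, DifferentiableAt ℝ (fun y => g (t, y) i) x := fun i =>
    (EuclideanSpace.proj (𝕜 := ℝ) i).differentiableAt.comp x (hgtd x hx)
  have hai : ∀ i : Fin 3,
      DifferentiableAt ℝ (fun y => fderiv ℝ (fun z => Y (t, z) i) y (u (t, y))) x := fun i =>
    (hYti' i).clm_apply hutd_x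
  have hbi : ∀ i : Fin 3,
      DifferentiableAt ℝ (fun y => fderiv ℝ (fun z => u (t, z) i) y (Y (t, y))) x := fun i =>
    (huti' i).clm_apply hYtd_x
  have hsplit : ∀ i : Fin 3,
      fderiv ℝ (fun y => g (t, y) i
          - fderiv ℝ (fun z => Y (t, z) i) y (u (t, y))
          + fderiv ℝ (fun z => u (t, z) i) y (Y (t, y))) x (EuclideanSpace.single i 1)
      = fderiv ℝ (fun y => g (t, y) i) x (EuclideanSpace.single i 1)
        - fderiv ℝ (fun y => fderiv ℝ (fun z => Y (t, z) i) y (u (t, y))) x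
            (EuclideanSpace.single i 1)
        + fderiv ℝ (fun y => fderiv ℝ (fun z => u (t, z) i) y (Y (t, y))) x
            (EuclideanSpace.single i 1) := by
    intro i
    rw [fderiv_fun_add ((hgdi i).fun_sub (hai i)) (hbi i), fderiv_fun_sub (hgdi i) (hai i)]
    simp
  -- the g-part sums to zero
  have hS1 : ∑ i : Fin 3, fderiv ℝ (fun y => g (t, y) i) x (EuclideanSpace.single i 1) = 0 := by
    have : ∑ i : Fin 3, fderiv ℝ (fun y => g (t, y) i) x (EuclideanSpace.single i 1)
        = div3 (fun y => g (t, y)) x :=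
      Finset.sum_congr rfl fun i _ => fderiv_comp_proj (hgtd x hx) _ i
    rw [this, hg_div t ht x hx]
  -- product rule for the (u·∇Y) part
  have hS2 : ∀ i : Fin 3,
      fderiv ℝ (fun y => fderiv ℝ (fun z => Y (t, z) i) y (u (t, y))) x (EuclideanSpace.single i 1)
      = fderiv ℝ (fun z => Y (t, z) i) x
            (fderiv ℝ (fun z => u (t, z)) x (EuclideanSpace.single i 1))
        + fderiv ℝ (fun y => fderiv ℝ (fun z => Y (t, z) i) y (EuclideanSpace.single i 1)) x
            (u (t, x)) := by
    intro i
    rw [fderiv_clm_apply (hYti' i) hutd_x]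
    simp only [ContinuousLinearMap.add_apply, ContinuousLinearMap.comp_apply,
      ContinuousLinearMap.flip_apply]
    rw [← fderiv_clm_apply_const (hYti' i) (u (t, x)) (EuclideanSpace.single i 1),
      symm_sp (hYti i) (u (t, x)) (EuclideanSpace.single i 1)]
  have hS3 : ∀ i : Fin 3,
      fderiv ℝ (fun y => fderiv ℝ (fun z => u (t, z) i) y (Y (t, y))) x (EuclideanSpace.single i 1)
      = fderiv ℝ (fun z => u (t, z) i) x
            (fderiv ℝ (fun z => Y (t, z)) x (EuclideanSpace.single i 1))
        + fderiv ℝ (fun y => fderiv ℝ (fun z => u (t, z) i) y (EuclideanSpace.single i 1)) x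
            (Y (t, x)) := by
    intro i
    rw [fderiv_clm_apply (huti' i) hYtd_x]
    simp only [ContinuousLinearMap.add_apply, ContinuousLinearMap.comp_apply,
      ContinuousLinearMap.flip_apply]
    rw [← fderiv_clm_apply_const (huti' i) (Y (t, x)) (EuclideanSpace.single i 1),
      symm_sp (huti i) (Y (t, x)) (EuclideanSpace.single i 1)]
  -- the symmetric second-order sums
  have hQ2 : ∑ i : Fin 3,
      fderiv ℝ (fun y => fderiv ℝ (fun z => Y (t, z) i) y (EuclideanSpace.single i 1)) x (u (t, x))
      = fderiv ℝ (fun y => div3 (fun z => Y (t, z)) y) x (u (t, x)) := by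
    have hd : ∀ i : Fin 3, DifferentiableAt ℝ
        (fun y => fderiv ℝ (fun z => Y (t, z) i) y (EuclideanSpace.single i 1)) x := fun i =>
      (hYti' i).clm_apply (differentiableAt_const _)
    have hsum : fderiv ℝ (fun y => ∑ i : Fin 3,
        fderiv ℝ (fun z => Y (t, z) i) y (EuclideanSpace.single i 1)) x
        = ∑ i : Fin 3, fderiv ℝ
            (fun y => fderiv ℝ (fun z => Y (t, z) i) y (EuclideanSpace.single i 1)) x :=
      fderiv_fun_sum fun i _ => hd i
    have hev : (fun y => ∑ i : Fin 3,
        fderiv ℝ (fun z => Y (t, z) i) y (EuclideanSpace.single i 1)) =ᶠ[nhds x]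
        (fun y => div3 (fun z => Y (t, z)) y) := by
      filter_upwards [hx_ev] with y hy
      exact Finset.sum_congr rfl fun i _ => fderiv_comp_proj (hYtd y hy) _ i
    rw [← hev.fderiv_eq, hsum]
    simp [ContinuousLinearMap.sum_apply]
  have hQ3 : ∑ i : Fin 3,
      fderiv ℝ (fun y => fderiv ℝ (fun z => u (t, z) i) y (EuclideanSpace.single i 1)) x (Y (t, x))
      = 0 := by
    have hd : ∀ i : Fin 3, DifferentiableAt ℝ
        (fun y => fderiv ℝ (fun z => u (t, z) i) y (EuclideanSpace.single i 1)) x := fun i =>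
      (huti' i).clm_apply (differentiableAt_const _)
    have hsum : fderiv ℝ (fun y => ∑ i : Fin 3,
        fderiv ℝ (fun z => u (t, z) i) y (EuclideanSpace.single i 1)) x
        = ∑ i : Fin 3, fderiv ℝ
            (fun y => fderiv ℝ (fun z => u (t, z) i) y (EuclideanSpace.single i 1)) x :=
      fderiv_fun_sum fun i _ => hd i
    have hev : (fun y => ∑ i : Fin 3,
        fderiv ℝ (fun z => u (t, z) i) y (EuclideanSpace.single i 1)) =ᶠ[nhds x]
        (fun _ => (0 : ℝ)) := by
      filter_upwards [hx_ev] with y hy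
      have : ∑ i : Fin 3, fderiv ℝ (fun z => u (t, z) i) y (EuclideanSpace.single i 1)
          = div3 (fun z => u (t, z)) y :=
        Finset.sum_congr rfl fun i _ => fderiv_comp_proj (hutd y hy) _ i
      rw [this, hu_div t ht y hy]
    have h0 : fderiv ℝ (fun y => ∑ i : Fin 3,
        fderiv ℝ (fun z => u (t, z) i) y (EuclideanSpace.single i 1)) x = 0 := by
      rw [hev.fderiv_eq]; exact fderiv_const_apply 0
    rw [← ContinuousLinearMap.sum_apply, ← hsum, h0]
    simp
  -- the cross terms agree
  have hX : ∑ i : Fin 3, fderiv ℝ (fun z => Y (t, z) i) x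
        (fderiv ℝ (fun z => u (t, z)) x (EuclideanSpace.single i 1))
      = ∑ i : Fin 3, fderiv ℝ (fun z => u (t, z) i) x
        (fderiv ℝ (fun z => Y (t, z)) x (EuclideanSpace.single i 1)) := by
    have h1 : ∀ i : Fin 3, fderiv ℝ (fun z => Y (t, z) i) x
        (fderiv ℝ (fun z => u (t, z)) x (EuclideanSpace.single i 1))
        = ∑ j : Fin 3, fderiv ℝ (fun z => u (t, z) j) x (EuclideanSpace.single i 1)
            * fderiv ℝ (fun z => Y (t, z) i) x (EuclideanSpace.single j 1) := by
      intro i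
      rw [fderiv_basis_decomp]
      exact Finset.sum_congr rfl fun j _ => by rw [fderiv_comp_proj hutd_x _ j]
    have h2 : ∀ j : Fin 3, fderiv ℝ (fun z => u (t, z) j) x
        (fderiv ℝ (fun z => Y (t, z)) x (EuclideanSpace.single j 1))
        = ∑ i : Fin 3, fderiv ℝ (fun z => Y (t, z) i) x (EuclideanSpace.single j 1)
            * fderiv ℝ (fun z => u (t, z) j) x (EuclideanSpace.single i 1) := by
      intro j
      rw [fderiv_basis_decomp]
      exact Finset.sum_congr rfl fun i _ => by rw [fderiv_comp_proj hYtd_x _ i]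
    simp only [h1, h2]
    rw [Finset.sum_comm]
    exact Finset.sum_congr rfl fun j _ => Finset.sum_congr rfl fun i _ => mul_comm _ _
  -- final assembly
  rw [hA2]
  simp only [hsplit, hS2, hS3]
  rw [Finset.sum_add_distrib, Finset.sum_sub_distrib, hS1,
    Finset.sum_add_distrib, Finset.sum_add_distrib, hQ2, hQ3, hX]
  ring
end
end

section
/- Let u : ℝ × ℝ³ → ℝ³ be continuous and let η : ℝ × ℝ × ℝ³ → ℝ³ be continuously differentiable in all variables and satisfy ∂_{t₂}η(t₁,t₂;x) = u(t₂, η(t₁,t₂;x)) for all t₁,t₂,x. Let O ⊆ ℝ × ℝ³ be open and let τ : O → ℝ, γ : O → ℝ³ be differentiable with η(t, τ(t,x); x) = γ(t,x) on O. Fix (t,x) ∈ O and a vector ν ∈ ℝ³ such that ν · (Dγ(t,x) w) = 0 for every w ∈ ℝ × ℝ³ (Dγ the full Fréchet derivative of γ at (t,x)) and u(τ(t,x), γ(t,x)) · ν ≠ 0. Then for every w ∈ ℝ × ℝ³, (Dτ(t,x))(w) = − (ν · (A w)) / (u(τ(t,x), γ(t,x)) · ν), where A is the Fréchet derivative at (t,x)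 of the map (t',x') ↦ η(t', s; x') with the middle argument frozen at s = τ(t,x). -/
noncomputable section

open scoped RealInnerProductSpace

local notation "E3" => EuclideanSpace ℝ (Fin 3)

/-- If `η(t, τ(t,x); x) = γ(t,x)` on an open set `O`, where `η` is `C¹` and satisfies
`∂_{t₂}η = u(t₂, η)`, and `ν` annihilates the range of `Dγ(t,x)` with
`u(τ(t,x),γ(t,x)) · ν ≠ 0`, then
`Dτ(t,x)(w) = − (ν · (A w)) / (u(τ(t,x),γ(t,x)) · ν)` where `A` is the derivative at
`(t,x)` of `(t',x') ↦ η(t', s; x')` with the middle argument frozen at `s = τ(t,x)`. -/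
theorem derivative_of_tau_formula
    (u : ℝ × E3 → E3) (hu : Continuous u)
    (η : ℝ → ℝ → E3 → E3)
    (hη : ContDiff ℝ 1 (fun p : ℝ × ℝ × E3 => η p.1 p.2.1 p.2.2))
    (hflow : ∀ t₁ t₂ x, HasDerivAt (fun s => η t₁ s x) (u (t₂, η t₁ t₂ x)) t₂)
    (O : Set (ℝ × E3)) (hO : IsOpen O)
    (τ : ℝ × E3 → ℝ) (γ : ℝ × E3 → E3)
    (hτ : ∀ p ∈ O, DifferentiableAt ℝ τ p)
    (hγ : ∀ p ∈ O, DifferentiableAt ℝ γ p)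
    (hrel : ∀ p ∈ O, η p.1 (τ p) p.2 = γ p)
    (t : ℝ) (x : E3) (hp : (t, x) ∈ O)
    (ν : E3)
    (hν : ∀ w : ℝ × E3, ⟪ν, fderiv ℝ γ (t, x) w⟫ = 0)
    (hne : ⟪u (τ (t, x), γ (t, x)), ν⟫ ≠ 0) :
    ∀ w : ℝ × E3,
      fderiv ℝ τ (t, x) w
        = - ⟪ν, fderiv ℝ (fun q : ℝ × E3 => η q.1 (τ (t, x)) q.2) (t, x) w⟫
            / ⟪u (τ (t, x), γ (t, x)), ν⟫ := by
  intro w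
  set H : ℝ × ℝ × E3 → E3 := fun p => η p.1 p.2.1 p.2.2 with hHdef
  have hH : Differentiable ℝ H := hη.differentiable one_ne_zero
  set s : ℝ := τ (t, x) with hsdef
  set L := fderiv ℝ H (t, s, x) with hLdef
  set T := fderiv ℝ τ (t, x) with hTdef
  -- derivative of the inner map p ↦ (p.1, τ p, p.2)
  have hGf : HasFDerivAt (fun p : ℝ × E3 => ((p.1, τ p, p.2) : ℝ × ℝ × E3))
      ((ContinuousLinearMap.fst ℝ ℝ E3).prod
        (T.prod (ContinuousLinearMap.snd ℝ ℝ E3))) (t, x) :=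
    HasFDerivAt.prodMk (hasFDerivAt_fst) (HasFDerivAt.prodMk ((hτ _ hp).hasFDerivAt) hasFDerivAt_snd)
  -- γ agrees with H ∘ G on O
  have heq : (fun p : ℝ × E3 => H (p.1, τ p, p.2)) =ᶠ[nhds (t, x)] γ := by
    filter_upwards [hO.mem_nhds hp] with p hpO
    exact hrel p hpO
  have hγfd : HasFDerivAt γ
      (L.comp ((ContinuousLinearMap.fst ℝ ℝ E3).prod
        (T.prod (ContinuousLinearMap.snd ℝ ℝ E3)))) (t, x) := by
    exact (HasFDerivAt.comp (g := H) (t, x) (hH (t, s, x)).hasFDerivAt hGf).congr_of_eventuallyEq heq.symm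
  -- derivative of the frozen map
  have hMf : HasFDerivAt (fun q : ℝ × E3 => ((q.1, s, q.2) : ℝ × ℝ × E3))
      ((ContinuousLinearMap.fst ℝ ℝ E3).prod
        ((0 : (ℝ × E3) →L[ℝ] ℝ).prod (ContinuousLinearMap.snd ℝ ℝ E3))) (t, x) :=
    HasFDerivAt.prodMk (hasFDerivAt_fst) (HasFDerivAt.prodMk (hasFDerivAt_const s _) hasFDerivAt_snd)
  have hAf : HasFDerivAt (fun q : ℝ × E3 => η q.1 s q.2)
      (L.comp ((ContinuousLinearMap.fst ℝ ℝ E3).prod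
        ((0 : (ℝ × E3) →L[ℝ] ℝ).prod (ContinuousLinearMap.snd ℝ ℝ E3)))) (t, x) :=
    HasFDerivAt.comp (g := H) (t, x) (hH (t, s, x)).hasFDerivAt hMf
  -- middle directional derivative equals u
  have hmid : L ((0 : ℝ), (1 : ℝ), (0 : E3)) = u (s, η t s x) := by
    have hin : HasDerivAt (fun c : ℝ => ((t, c, x) : ℝ × ℝ × E3))
        ((0 : ℝ), (1 : ℝ), (0 : E3)) s :=
      HasDerivAt.prodMk (hasDerivAt_const s t) (HasDerivAt.prodMk (hasDerivAt_id s) (hasDerivAt_const s x))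
    have h1 : HasDerivAt (fun c : ℝ => H (t, c, x)) (L (0, 1, 0)) s :=
      HasFDerivAt.comp_hasDerivAt (l := H) s (hH (t, s, x)).hasFDerivAt hin
    exact h1.unique (hflow t s x)
  have hγrel : η t s x = γ (t, x) := hrel (t, x) hp
  -- key decomposition of Dγ w
  have hdecomp : fderiv ℝ γ (t, x) w
      = fderiv ℝ (fun q : ℝ × E3 => η q.1 s q.2) (t, x) w + T w • u (s, γ (t, x)) := by
    rw [hγfd.fderiv, hAf.fderiv]
    have : ((w.1, T w, w.2) : ℝ × ℝ × E3)
        = (w.1, (0 : ℝ), w.2) + (T w) • ((0 : ℝ), (1 : ℝ), (0 : E3)) := by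
      simp [Prod.ext_iff]
    simp only [ContinuousLinearMap.comp_apply, ContinuousLinearMap.prod_apply,
      ContinuousLinearMap.coe_fst', ContinuousLinearMap.coe_snd',
      ContinuousLinearMap.zero_apply]
    rw [this, map_add, map_smul, hmid, hγrel]
  have hzero := hν w
  rw [hdecomp, inner_add_right, inner_smul_right] at hzero
  have hsym : ⟪ν, u (s, γ (t, x))⟫ = ⟪u (τ (t, x), γ (t, x)), ν⟫ := by
    rw [← hsdef, real_inner_comm]
  rw [hsym] at hzero
  have : T w * ⟪u (τ (t, x), γ (t, x)), ν⟫
      = - ⟪ν, fderiv ℝ (fun q : ℝ × E3 => η q.1 s q.2) (t, x) w⟫ := by linarith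
  rw [eq_div_iff hne]
  exact this
end
end
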